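/- arXiv:2012.02942 — 2 statements merged into one kernel-verified Lean document; each statement's English description precedes it below -/
import Mathlib

section
/- Every automorphism of the graph P (Petersen graph realized on 3-element subsets) is induced by a unique permutation of {1,2,3,4,5}; that is, the natural group homomorphism from S₅ to the automorphism group of P given by σ ↦ (A ↦ σ(A)) is surjective (and hence, combined with injectivity, an isomorphism). -/
set_option maxRecDepth 100000
set_option maxHeartbeats 2000000
set_option synthInstance.maxSize 4000
set_option synthInstance.maxHeartbeats 1000000

/-- The Petersen graph, realized on the 3-element subsets of a 5-element set:
two such subsets are adjacent when their intersection has exactly one element. -/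
def Petersen : SimpleGraph {A : Finset (Fin 5) // A.card = 3} where
  Adj A B := ((A : Finset (Fin 5)) ∩ B).card = 1
  symm := by
    constructor
    intro A B h
    rwa [Finset.inter_comm]
  loopless := by
    constructor
    rintro ⟨A, hA⟩ h
    simp only [Finset.inter_self] at h
    omega

abbrev PV := {A : Finset (Fin 5) // A.card = 3}

lemma pet_L0 : ∀ (i : Fin 5) (A B : PV), i ∉ (A : Finset (Fin 5)) → i ∉ (B : Finset (Fin 5)) →
    ((A : Finset (Fin 5)) ∩ B).card ≠ 1 := by decide

lemma pet_L1 : ∀ A B C D : PV, (A ≠ B ∧ A ≠ C ∧ A ≠ D ∧ B ≠ C ∧ B ≠ D ∧ C ≠ D) →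
    (((A : Finset (Fin 5)) ∩ B).card ≠ 1 ∧ ((A : Finset (Fin 5)) ∩ C).card ≠ 1 ∧
      ((A : Finset (Fin 5)) ∩ D).card ≠ 1 ∧ ((B : Finset (Fin 5)) ∩ C).card ≠ 1 ∧
      ((B : Finset (Fin 5)) ∩ D).card ≠ 1 ∧ ((C : Finset (Fin 5)) ∩ D).card ≠ 1) →
    ∃ j : Fin 5, j ∉ (A : Finset (Fin 5)) ∧ j ∉ (B : Finset (Fin 5)) ∧
      j ∉ (C : Finset (Fin 5)) ∧ j ∉ (D : Finset (Fin 5)) := by decide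

lemma pet_Lenum : ∀ i : Fin 5, ∃ A B C D : PV,
    (A ≠ B ∧ A ≠ C ∧ A ≠ D ∧ B ≠ C ∧ B ≠ D ∧ C ≠ D) ∧
    (∀ E : PV, i ∉ (E : Finset (Fin 5)) ↔ (E = A ∨ E = B ∨ E = C ∨ E = D)) := by decide

lemma pet_Lcard : ∀ j : Fin 5,
    (Finset.univ.filter (fun E : PV => j ∉ (E : Finset (Fin 5)))).card = 4 := by decide

lemma pet_L3 : ∀ i₁ i₂ : Fin 5,
    (∀ E : PV, i₁ ∈ (E : Finset (Fin 5)) ↔ i₂ ∈ (E : Finset (Fin 5))) → i₁ = i₂ := by decide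

lemma pet_L4 : ∀ ρ : Equiv.Perm (Fin 5),
    (∀ A : Finset (Fin 5), A.card = 3 → A.image ρ = A) → ∀ x, ρ x = x := by decide

lemma pet_key (f : Petersen ≃g Petersen) :
    ∀ i : Fin 5, ∃ j : Fin 5, ∀ E : PV,
      i ∉ (E : Finset (Fin 5)) ↔ j ∉ ((f E : PV) : Finset (Fin 5)) := by
  intro i
  obtain ⟨A, B, C, D, ⟨hAB, hAC, hAD, hBC, hBD, hCD⟩, hmem⟩ := pet_Lenum i
  have hfinj : Function.Injective f := f.toEquiv.injective
  have hiA : i ∉ (A : Finset (Fin 5)) := (hmem A).2 (Or.inl rfl)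
  have hiB : i ∉ (B : Finset (Fin 5)) := (hmem B).2 (Or.inr (Or.inl rfl))
  have hiC : i ∉ (C : Finset (Fin 5)) := (hmem C).2 (Or.inr (Or.inr (Or.inl rfl)))
  have hiD : i ∉ (D : Finset (Fin 5)) := (hmem D).2 (Or.inr (Or.inr (Or.inr rfl)))
  have hadj : ∀ X Y : PV, Petersen.Adj (f X) (f Y) ↔ Petersen.Adj X Y := fun X Y => f.map_adj_iff
  have hnadj : ∀ X Y : PV, i ∉ (X : Finset (Fin 5)) → i ∉ (Y : Finset (Fin 5)) →
      (((f X : PV) : Finset (Fin 5)) ∩ (f Y : PV)).card ≠ 1 := by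
    intro X Y hX hY h
    exact pet_L0 i X Y hX hY ((hadj X Y).1 h)
  obtain ⟨j, hjA, hjB, hjC, hjD⟩ := pet_L1 (f A) (f B) (f C) (f D)
    ⟨hfinj.ne hAB, hfinj.ne hAC, hfinj.ne hAD, hfinj.ne hBC, hfinj.ne hBD, hfinj.ne hCD⟩
    ⟨hnadj A B hiA hiB, hnadj A C hiA hiC, hnadj A D hiA hiD,
      hnadj B C hiB hiC, hnadj B D hiB hiD, hnadj C D hiC hiD⟩
  refine ⟨j, fun E => ⟨fun hiE => ?_, fun hjE => ?_⟩⟩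
  · rcases (hmem E).1 hiE with rfl | rfl | rfl | rfl <;> assumption
  · by_contra hiE
    set T := Finset.univ.filter (fun X : PV => j ∉ (X : Finset (Fin 5))) with hT
    have hsub : ({f A, f B, f C, f D} : Finset PV) ⊆ T := by
      intro X hX
      simp only [Finset.mem_insert, Finset.mem_singleton] at hX
      rcases hX with rfl | rfl | rfl | rfl <;> simp [hT, hjA, hjB, hjC, hjD]
    have hcard : ({f A, f B, f C, f D} : Finset PV).card = 4 := by
      rw [Finset.card_insert_of_notMem (by simp [hfinj.ne hAB, hfinj.ne hAC, hfinj.ne hAD]),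
        Finset.card_insert_of_notMem (by simp [hfinj.ne hBC, hfinj.ne hBD]),
        Finset.card_insert_of_notMem (by simp [hfinj.ne hCD]), Finset.card_singleton]
    have hTeq : T = ({f A, f B, f C, f D} : Finset PV) :=
      (Finset.eq_of_subset_of_card_le hsub (by rw [pet_Lcard j, hcard])).symm
    have hfE : f E ∈ T := by simp [hT, hjE]
    rw [hTeq] at hfE
    simp only [Finset.mem_insert, Finset.mem_singleton] at hfE
    have hEmem : E = A ∨ E = B ∨ E = C ∨ E = D := by
      rcases hfE with h | h | h | h
      · exact Or.inl (hfinj h)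
      · exact Or.inr (Or.inl (hfinj h))
      · exact Or.inr (Or.inr (Or.inl (hfinj h)))
      · exact Or.inr (Or.inr (Or.inr (hfinj h)))
    exact (hmem E).2 hEmem hiE

lemma pet_exists (f : Petersen ≃g Petersen) :
    ∃ σ : Equiv.Perm (Fin 5), ∀ A : PV,
      ((f A : PV) : Finset (Fin 5)) = (A : Finset (Fin 5)).image σ := by
  choose g hg using pet_key f
  have hginj : Function.Injective g := by
    intro i₁ i₂ h
    refine pet_L3 i₁ i₂ fun E => ?_
    have h1 := hg i₁ E
    have h2 := hg i₂ E
    rw [h] at h1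
    rw [← not_iff_not]
    exact h1.trans h2.symm
  have hgbij : Function.Bijective g := Finite.injective_iff_bijective.mp hginj
  refine ⟨Equiv.ofBijective g hgbij, fun A => ?_⟩
  have hσ : ∀ i : Fin 5, i ∈ (A : Finset (Fin 5)) ↔ g i ∈ ((f A : PV) : Finset (Fin 5)) :=
    fun i => not_iff_not.mp (hg i A)
  ext x
  simp only [Finset.mem_image]
  constructor
  · intro hx
    obtain ⟨y, hy⟩ := hgbij.surjective x
    exact ⟨y, (hσ y).2 (hy ▸ hx), hy⟩
  · rintro ⟨y, hy, rfl⟩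
    exact (hσ y).1 hy

/-- Every automorphism of the Petersen graph is induced by a unique permutation of
{1,…,5}; equivalently, any group homomorphism S₅ → Aut(P) acting by σ ↦ (A ↦ σ(A))
is surjective. -/
theorem petersen_aut_induced_by_unique_perm :
    (∀ f : Petersen ≃g Petersen, ∃! σ : Equiv.Perm (Fin 5),
      ∀ A : {A : Finset (Fin 5) // A.card = 3},
        (f A : Finset (Fin 5)) = (A : Finset (Fin 5)).image σ) ∧
    (∀ φ : Equiv.Perm (Fin 5) →* (Petersen ≃g Petersen),
      (∀ (σ : Equiv.Perm (Fin 5)) (A : {A : Finset (Fin 5) // A.card = 3}),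
        ((φ σ) A : Finset (Fin 5)) = (A : Finset (Fin 5)).image σ) →
      Function.Surjective φ) := by
  have main : ∀ f : Petersen ≃g Petersen, ∃! σ : Equiv.Perm (Fin 5),
      ∀ A : PV, ((f A : PV) : Finset (Fin 5)) = (A : Finset (Fin 5)).image σ := by
    intro f
    obtain ⟨σ, hσ⟩ := pet_exists f
    refine ⟨σ, hσ, fun τ hτ => ?_⟩
    have himg : ∀ A : Finset (Fin 5), A.card = 3 → A.image τ = A.image σ := by
      intro A hA
      rw [← hσ ⟨A, hA⟩, ← hτ ⟨A, hA⟩]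
    have hρ : ∀ x, σ.symm (τ x) = x := by
      refine pet_L4 (τ.trans σ.symm) fun A hA => ?_
      have h3 : (A.image τ).card = 3 := by rw [Finset.card_image_of_injective _ τ.injective, hA]
      calc A.image (τ.trans σ.symm) = (A.image τ).image σ.symm := by
            rw [Finset.image_image]; rfl
        _ = (A.image σ).image σ.symm := by rw [himg A hA]
        _ = A := by
            rw [Finset.image_image]
            simp [Function.comp_def]
    refine Equiv.ext fun x => ?_
    have := hρ x
    calc τ x = σ (σ.symm (τ x)) := (σ.apply_symm_apply _).symm
      _ = σ x := by rw [this]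
  refine ⟨main, fun φ hφ f => ?_⟩
  obtain ⟨σ, hσ, _⟩ := main f
  exact ⟨σ, DFunLike.ext _ _ fun A => Subtype.ext ((hφ σ A).trans (hσ A).symm)⟩
end

section
/- The automorphism group of the graph P (Petersen graph realized on 3-element subsets of {1,2,3,4,5}, with adjacency |A ∩ B| = 1) has exactly 120 elements. -/
namespace PetersenAux

abbrev V := {A : Finset (Fin 5) // A.card = 3}

/-- The triples avoiding `m`: a maximum independent set of the Petersen graph. -/
def Smem (m : Fin 5) : Finset V := Finset.univ.filter (fun A => m ∉ A.1)

lemma mem_Smem {m : Fin 5} {A : V} : A ∈ Smem m ↔ m ∉ A.1 := by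
  simp [Smem]

lemma L1 : ∀ m, (Smem m).card = 4 := by decide

lemma L2 : ∀ m, ∀ A ∈ Smem m, ∀ B ∈ Smem m, A ≠ B → (A.1 ∩ B.1).card ≠ 1 := by decide

lemma L4 : ∀ m m' : Fin 5, Smem m = Smem m' → m = m' := by decide

lemma L5 : ∀ m : Fin 5, ∃ A B : V, A.1 ∩ B.1 = {m} := by decide

set_option synthInstance.maxSize 2000 in
set_option maxRecDepth 100000 in
lemma L3' : ∀ A B C D : V, A ≠ B → A ≠ C → A ≠ D → B ≠ C → B ≠ D → C ≠ D →
    (A.1 ∩ B.1).card ≠ 1 → (A.1 ∩ C.1).card ≠ 1 → (A.1 ∩ D.1).card ≠ 1 →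
    (B.1 ∩ C.1).card ≠ 1 → (B.1 ∩ D.1).card ≠ 1 → (C.1 ∩ D.1).card ≠ 1 →
    ∃ m : Fin 5, m ∉ A.1 ∧ m ∉ B.1 ∧ m ∉ C.1 ∧ m ∉ D.1 := by decide

/-- Every independent set of size 4 in the Petersen graph is some `Smem m`. -/
lemma indep_classify (s : Finset V) (h4 : s.card = 4)
    (hind : ∀ A ∈ s, ∀ B ∈ s, A ≠ B → (A.1 ∩ B.1).card ≠ 1) :
    ∃ m, s = Smem m := by
  obtain ⟨a, t, hat, rfl, ht3⟩ := Finset.card_eq_succ.mp h4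
  obtain ⟨b, c, d, hbc, hbd, hcd, rfl⟩ := Finset.card_eq_three.mp ht3
  have hab : a ≠ b := fun h => hat (by simp [h])
  have hac : a ≠ c := fun h => hat (by simp [h])
  have had : a ≠ d := fun h => hat (by simp [h])
  have ma : a ∈ insert a ({b, c, d} : Finset V) := by simp
  have mb : b ∈ insert a ({b, c, d} : Finset V) := by simp
  have mc : c ∈ insert a ({b, c, d} : Finset V) := by simp
  have md : d ∈ insert a ({b, c, d} : Finset V) := by simp
  obtain ⟨m, hma, hmb, hmc, hmd⟩ := L3' a b c d hab hac had hbc hbd hcd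
    (hind a ma b mb hab) (hind a ma c mc hac) (hind a ma d md had)
    (hind b mb c mc hbc) (hind b mb d md hbd) (hind c mc d md hcd)
  refine ⟨m, Finset.eq_of_subset_of_card_le ?_ (by rw [L1 m, h4])⟩
  intro x hx
  rw [mem_Smem]
  rcases Finset.mem_insert.mp hx with h | h
  · exact h ▸ hma
  · rcases Finset.mem_insert.mp h with h | h
    · exact h ▸ hmb
    · rcases Finset.mem_insert.mp h with h | h
      · exact h ▸ hmc
      · exact (Finset.mem_singleton.mp h) ▸ hmd

/-- The automorphism induced by a permutation of the ground set. -/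
def E (σ : Equiv.Perm (Fin 5)) : Petersen ≃g Petersen where
  toFun A := ⟨A.1.image σ, by
    rw [Finset.card_image_of_injective _ σ.injective, A.2]⟩
  invFun A := ⟨A.1.image σ.symm, by
    rw [Finset.card_image_of_injective _ σ.symm.injective, A.2]⟩
  left_inv A := Subtype.ext (by
    simp [Finset.image_image, Function.comp_def])
  right_inv A := Subtype.ext (by
    simp [Finset.image_image, Function.comp_def])
  map_rel_iff' := by
    intro A B
    show ((A.1.image σ) ∩ (B.1.image σ)).card = 1 ↔ (A.1 ∩ B.1).card = 1
    rw [← Finset.image_inter _ _ σ.injective,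
      Finset.card_image_of_injective _ σ.injective]

lemma E_injective : Function.Injective E := by
  intro σ τ h
  have hAll : ∀ A : V, A.1.image σ = A.1.image τ := by
    intro A
    have := congrArg (fun g => (g A).1) h
    simpa [E] using this
  apply Equiv.ext; intro m
  obtain ⟨A, B, hAB⟩ := L5 m
  have h1 : (A.1 ∩ B.1).image σ = (A.1 ∩ B.1).image τ := by
    rw [Finset.image_inter _ _ σ.injective, Finset.image_inter _ _ τ.injective,
      hAll A, hAll B]
  rw [hAB] at h1
  exact Finset.singleton_injective h1

lemma E_surjective : Function.Surjective E := by
  intro f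
  -- image of each maximum independent set is another one
  have key : ∀ m, ∃ m', (Smem m).image f = Smem m' := by
    intro m
    apply indep_classify
    · rw [Finset.card_image_of_injective _ f.injective, L1]
    · intro A hA B hB hne
      obtain ⟨A₀, hA₀, rfl⟩ := Finset.mem_image.mp hA
      obtain ⟨B₀, hB₀, rfl⟩ := Finset.mem_image.mp hB
      have hne₀ : A₀ ≠ B₀ := fun h => hne (by rw [h])
      have : ¬ Petersen.Adj A₀ B₀ := L2 m A₀ hA₀ B₀ hB₀ hne₀
      have h2 : ¬ Petersen.Adj (f A₀) (f B₀) := fun h => this (f.map_adj_iff.mp h)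
      exact h2
  choose σf hσf using key
  have hiter : ∀ m (A : V), A ∈ Smem m ↔ f A ∈ Smem (σf m) := by
    intro m A
    constructor
    · intro h
      rw [← hσf m]
      exact Finset.mem_image_of_mem _ h
    · intro h
      rw [← hσf m] at h
      obtain ⟨B, hB, hBA⟩ := Finset.mem_image.mp h
      have : B = A := f.injective hBA
      exact this ▸ hB
  have hinj : Function.Injective σf := by
    intro m m' h
    apply L4
    ext A
    rw [hiter m A, hiter m' A, h]
  have hbij : Function.Bijective σf := Finite.injective_iff_bijective.mp hinj
  let σ : Equiv.Perm (Fin 5) := Equiv.ofBijective σf hbij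
  have hmem : ∀ (A : V) (m : Fin 5), m ∈ A.1 ↔ σf m ∈ (f A).1 := by
    intro A m
    have := (hiter m A)
    rw [mem_Smem, mem_Smem] at this
    exact not_iff_not.mp this
  refine ⟨σ, ?_⟩
  have hfun : ∀ A : V, E σ A = f A := by
    intro A
    apply Subtype.ext
    show A.1.image σ = (f A).1
    ext x
    obtain ⟨m, rfl⟩ := hbij.surjective x
    constructor
    · intro hx
      obtain ⟨m', hm', hmm⟩ := Finset.mem_image.mp hx
      have : m' = m := hinj hmm
      exact (hmem A m).mp (this ▸ hm')
    · intro hx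
      exact Finset.mem_image_of_mem _ ((hmem A m).mpr hx)
  exact DFunLike.ext _ _ hfun

/-- The automorphism group is equivalent to `S₅`. -/
noncomputable def permEquivAut : Equiv.Perm (Fin 5) ≃ (Petersen ≃g Petersen) :=
  Equiv.ofBijective E ⟨E_injective, E_surjective⟩

end PetersenAux

/-- The automorphism group of the Petersen graph has exactly 120 elements. -/
theorem petersen_aut_card : Nat.card (Petersen ≃g Petersen) = 120 := by
  rw [← Nat.card_congr PetersenAux.permEquivAut]
  rw [Nat.card_eq_fintype_card, Fintype.card_perm]
  decide
end
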